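/- arXiv:2302.01009 — 2 statements merged into one kernel-verified Lean document; each statement's English description precedes it below -/
import Mathlib

section
/- For every natural number m there exists an integer n > 0 such that f^n(m,1,1,0) = (m+1,1,1,0). -/
/-- Conditions I-III defining the set V of 4-tuples (a,b,c,d). -/
def inV : ℕ × ℕ × ℕ × ℕ → Prop :=
  fun ⟨a, b, c, d⟩ =>
    (∃ k, c = 2 ^ k) ∧ (d = 0 ∨ d = 1) ∧ (a > 0 → b = 0 → c > 1) ∧ (a = 0 → c = 1)

open Classical in
/-- The function f defined by the six rules. -/
noncomputable def f : ℕ × ℕ × ℕ × ℕ → ℕ × ℕ × ℕ × ℕ :=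
  fun ⟨a, b, c, d⟩ =>
    if d = 0 then
      if a > 0 then
        if b > 0 then (a, b - 1, 2 * c, 0)
        else (a - 1, c, 1, 0)
      else (0, b + 1, 1, 1)
    else
      if c > 1 then (a, b + 1, c / 2, 1)
      else if ∃ k > 0, b = 2 ^ k then (a + 1, 0, b, 1)
      else (a, b, 1, 0)

def Reach (x y : ℕ × ℕ × ℕ × ℕ) : Prop := ∃ n, f^[n] x = y

lemma Reach.trans' {x y z : ℕ × ℕ × ℕ × ℕ} (h1 : Reach x y) (h2 : Reach y z) :
    Reach x z := by
  obtain ⟨n, hn⟩ := h1; obtain ⟨m, hm⟩ := h2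
  exact ⟨m + n, by rw [Function.iterate_add_apply, hn, hm]⟩

lemma Reach.single {x y : ℕ × ℕ × ℕ × ℕ} (h : f x = y) : Reach x y := ⟨1, by simpa using h⟩
lemma Reach.rfl (x : ℕ × ℕ × ℕ × ℕ) : Reach x x := ⟨0, _root_.rfl⟩

lemma f1 (a b c : ℕ) : f (a+1, b+1, c, 0) = (a+1, b, 2*c, 0) := by simp [f]
lemma f2 (a c : ℕ) : f (a+1, 0, c, 0) = (a, c, 1, 0) := by simp [f]
lemma f3 (b c : ℕ) : f (0, b, c, 0) = (0, b+1, 1, 1) := by simp [f]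
lemma f4 (a b c : ℕ) (h : 1 < c) : f (a, b, c, 1) = (a, b+1, c/2, 1) := by simp [f, h]
lemma f5 (a k : ℕ) (hk : 0 < k) : f (a, 2^k, 1, 1) = (a+1, 0, 2^k, 1) := by
  have : ∃ j > 0, (2:ℕ)^k = 2^j := ⟨k, hk, rfl⟩
  simp [f, this]
  omega
lemma f6 (a b : ℕ) (hb : ¬ ∃ k > 0, b = 2^k) : f (a, b, 1, 1) = (a, b, 1, 0) := by
  simp [f, hb]

lemma chainA (a : ℕ) : ∀ b c, Reach (a+1, b, c, 0) (a+1, 0, 2^b * c, 0) := by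
  intro b
  induction b with
  | zero => intro c; simpa using Reach.rfl _
  | succ b ih =>
    intro c
    refine (Reach.single (f1 a b c)).trans' ?_
    have := ih (2*c)
    have h : 2^b * (2*c) = 2^(b+1) * c := by ring
    rwa [h] at this

lemma chainC (a : ℕ) : ∀ k b, Reach (a, b, 2^k, 1) (a, b+k, 1, 1) := by
  intro k
  induction k with
  | zero => intro b; simpa using Reach.rfl _
  | succ k ih =>
    intro b
    have h1 : (1:ℕ) < 2^(k+1) := Nat.one_lt_two_pow_iff.mpr (by omega)
    have h2 : (2:ℕ)^(k+1) = 1 → False := by omega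
    have hs : f (a, b, 2^(k+1), 1) = (a, b+1, 2^k, 1) := by
      rw [f4 a b _ h1, pow_succ, Nat.mul_div_cancel _ (by norm_num)]
    refine (Reach.single hs).trans' ?_
    have := ih (b+1)
    have h : b + 1 + k = b + (k+1) := by omega
    rwa [h] at this

lemma main : ∀ a b, 1 ≤ b → Reach (a, b, 1, 0) (a, b+1, 1, 1) := by
  intro a
  induction a with
  | zero => intro b hb; exact Reach.single (f3 b 1)
  | succ a ih =>
    have P : ∀ fuel x K, 1 ≤ x → 2^(K-1) ≤ x → x < 2^K → 2^K - x ≤ fuel →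
        Reach (a, x, 1, 0) (a+1, K, 1, 1) := by
      intro fuel
      induction fuel with
      | zero => intro x K h1 h2 h3 h4; omega
      | succ fuel ihf =>
        intro x K h1 h2 h3 h4
        have hK : 0 < K := by
          rcases Nat.eq_zero_or_pos K with h | h
          · subst h; simp at h3; omega
          · exact h
        have step1 : Reach (a, x, 1, 0) (a, x+1, 1, 1) := ih x h1
        by_cases hx : x + 1 = 2^K
        · refine step1.trans' ?_
          rw [hx]
          refine (Reach.single (f5 a K hK)).trans' ?_
          simpa using chainC (a+1) K 0
        · have hnp : ¬ ∃ k > 0, x+1 = 2^k := by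
            rintro ⟨k, hk, he⟩
            have hlt : (2:ℕ)^k < 2^K := by omega
            have hkK : k < K := (pow_lt_pow_iff_right₀ (by norm_num)).mp hlt
            have : k ≤ K - 1 := by omega
            have : (2:ℕ)^k ≤ 2^(K-1) := Nat.pow_le_pow_right (by norm_num) this
            omega
          refine step1.trans' ((Reach.single (f6 a (x+1) hnp)).trans' ?_)
          exact ihf (x+1) K (by omega) (by omega) (by omega) (by omega)
    intro b hb
    have d1 : Reach (a+1, b, 1, 0) (a, 2^b, 1, 0) := by
      refine (chainA a b 1).trans' ?_
      have := Reach.single (f2 a (2^b * 1))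
      simpa using this
    refine d1.trans' ?_
    have h1 : 1 ≤ 2^b := Nat.one_le_two_pow
    have h2 : 2^((b+1)-1) ≤ 2^b := by simp
    have h3 : (2:ℕ)^b < 2^(b+1) := by
      have : (2:ℕ)^(b+1) = 2 * 2^b := by ring
      omega
    exact P (2^(b+1)) (2^b) (b+1) h1 h2 h3 (by omega)

theorem stmt_5 : ∀ m : ℕ, ∃ n : ℕ, 0 < n ∧ f^[n] (m, 1, 1, 0) = (m + 1, 1, 1, 0) := by
  intro m
  obtain ⟨n, hn⟩ := main m 1 le_rfl
  rw [(by norm_num : (1:ℕ)+1 = 2)] at hn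
  refine ⟨3 + n, by omega, ?_⟩
  rw [Function.iterate_add_apply, hn]
  have s1 : f (m, 2, 1, 1) = (m+1, 0, 2, 1) := by
    have := f5 m 1 one_pos; simpa using this
  have s2 : f (m+1, 0, 2, 1) = (m+1, 1, 1, 1) := by
    have := f4 (m+1) 0 2 one_lt_two; simpa using this
  have s3 : f (m+1, 1, 1, 1) = (m+1, 1, 1, 0) := by
    refine f6 (m+1) 1 ?_
    rintro ⟨k, hk, he⟩
    have : (2:ℕ)^k ≥ 2 := by
      calc (2:ℕ)^k ≥ 2^1 := Nat.pow_le_pow_right (by norm_num) hk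
      _ = 2 := by norm_num
    omega
  show f^[3] (m, 2, 1, 1) = _
  simp only [Function.iterate_succ, Function.iterate_zero, Function.comp_apply, id_eq]
  rw [s1, s2, s3]
end

section
/- For every v = (a,b,c,d) ∈ V there exist natural numbers m and n such that f^n(v) = (0, 2^m, 1, 1). -/
lemma step_notpow (a b : ℕ) (h : ¬ ∃ k > 0, b = 2 ^ k) :
    f (a, b, 1, 1) = (a, b, 1, 0) := by
  simp [f, h]

lemma step_a0 (b c : ℕ) : f (0, b, c, 0) = (0, b + 1, 1, 1) := by
  simp [f]

lemma reach0 : ∀ j b : ℕ, (∃ m, 0 < m ∧ b + j = 2 ^ m) →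
    ∃ m n : ℕ, f^[n] (0, b, 1, 1) = (0, 2 ^ m, 1, 1) := by
  intro j
  induction j with
  | zero =>
    rintro b ⟨m, hm, he⟩
    exact ⟨m, 0, by simp [← he]⟩
  | succ j ih =>
    intro b h
    by_cases hp : ∃ k > 0, b = 2 ^ k
    · obtain ⟨k, hk, rfl⟩ := hp
      exact ⟨k, 0, rfl⟩
    · obtain ⟨m, hm, he⟩ := h
      obtain ⟨m', n, hn⟩ := ih (b + 1) ⟨m, hm, by omega⟩
      refine ⟨m', n + 2, ?_⟩
      rw [Function.iterate_add_apply]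
      have h2 : f^[2] (0, b, 1, 1) = (0, b + 1, 1, 1) := by
        show f (f (0, b, 1, 1)) = _
        rw [step_notpow _ _ hp, step_a0]
      rw [h2, hn]

lemma reachA (b : ℕ) : ∃ m n : ℕ, f^[n] (0, b, 1, 1) = (0, 2 ^ m, 1, 1) := by
  have hb : b < 2 ^ b := Nat.lt_two_pow_self (n := b)
  have hb2 : 2 ^ b ≤ 2 ^ (b + 1) := Nat.pow_le_pow_right (by norm_num) (by omega)
  exact reach0 (2 ^ (b + 1) - b) b ⟨b + 1, by omega, by omega⟩

lemma lemB : ∀ b a c : ℕ, f^[b] (a + 1, b, c, 0) = (a + 1, 0, 2 ^ b * c, 0) := by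
  intro b
  induction b with
  | zero => intro a c; simp
  | succ b ih =>
    intro a c
    rw [Function.iterate_succ_apply]
    have h1 : f (a + 1, b + 1, c, 0) = (a + 1, b, 2 * c, 0) := by
      simp [f]
    rw [h1, ih]
    ring_nf

lemma lemC : ∀ a b c : ℕ, ∃ m n : ℕ, f^[n] (a, b, c, 0) = (0, 2 ^ m, 1, 1) := by
  intro a
  induction a with
  | zero =>
    intro b c
    obtain ⟨m, n, hn⟩ := reachA (b + 1)
    exact ⟨m, n + 1, by rw [Function.iterate_add_apply, Function.iterate_one, step_a0, hn]⟩
  | succ a ih =>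
    intro b c
    obtain ⟨m, n, hn⟩ := ih (2 ^ b * c) 1
    refine ⟨m, n + 1 + b, ?_⟩
    rw [Function.iterate_add_apply, lemB, Function.iterate_add_apply, Function.iterate_one]
    have h1 : f (a + 1, 0, 2 ^ b * c, 0) = (a, 2 ^ b * c, 1, 0) := by
      simp [f]
    rw [h1, hn]

lemma lemD : ∀ e a b : ℕ, f^[e] (a, b, 2 ^ e, 1) = (a, b + e, 1, 1) := by
  intro e
  induction e with
  | zero => intro a b; simp
  | succ e ih =>
    intro a b
    rw [Function.iterate_succ_apply]
    have h1 : f (a, b, 2 ^ (e + 1), 1) = (a, b + 1, 2 ^ e, 1) := by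
      have hgt : 1 < 2 ^ (e + 1) := Nat.one_lt_two_pow (by omega)
      have hdiv : 2 ^ (e + 1) / 2 = 2 ^ e := by
        rw [pow_succ, Nat.mul_div_cancel _ (by norm_num)]
      simp [f, hgt, hdiv]
    rw [h1, ih]
    ring_nf

lemma lemE : ∀ b a : ℕ, ∃ m n : ℕ, f^[n] (a, b, 1, 1) = (0, 2 ^ m, 1, 1) := by
  intro b
  induction b using Nat.strong_induction_on with
  | _ b ih =>
    intro a
    by_cases hp : ∃ k > 0, b = 2 ^ k
    · obtain ⟨k, hk, rfl⟩ := hp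
      have h1 : f (a, 2 ^ k, 1, 1) = (a + 1, 0, 2 ^ k, 1) := by
        have : ∃ j > 0, 2 ^ k = 2 ^ j := ⟨k, hk, rfl⟩
        simp [f, this]
        omega
      obtain ⟨m, n, hn⟩ := ih k (Nat.lt_two_pow_self (n := k)) (a + 1)
      refine ⟨m, n + k + 1, ?_⟩
      rw [Function.iterate_add_apply, Function.iterate_add_apply, Function.iterate_one,
        h1, lemD]
      simpa using hn
    · obtain ⟨m, n, hn⟩ := lemC a b 1
      exact ⟨m, n + 1, by rw [Function.iterate_add_apply, Function.iterate_one,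
        step_notpow _ _ hp, hn]⟩

theorem stmt_6 : ∀ v : ℕ × ℕ × ℕ × ℕ, inV v →
    ∃ m n : ℕ, f^[n] v = (0, 2 ^ m, 1, 1) := by
  rintro ⟨a, b, c, d⟩ ⟨⟨e, rfl⟩, hd, -, -⟩
  rcases hd with rfl | rfl
  · obtain ⟨m, n, hn⟩ := lemC a b (2 ^ e)
    exact ⟨m, n, hn⟩
  · obtain ⟨m, n, hn⟩ := lemE (b + e) a
    refine ⟨m, n + e, ?_⟩
    rw [Function.iterate_add_apply, lemD, hn]
end
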